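/- arXiv:2004.06326 — 4 statements merged into one kernel-verified Lean document; each statement's English description precedes it below -/
import Mathlib

section
/- Let sigma0, sigmaL2, sigmaB2 be positive reals, let e : N -> Prop be decidable, let h : N -> N count the events (h(0) = 0; h(k) = h(k-1) + 1 if e(k) holds, else h(k-1)), and let V : N -> R satisfy V(0) = sigma0, and for k >= 1, V(k) = V(k-1)/(1 + V(k-1)/sigmaL2 + V(k-1)/sigmaB2) if e(k) holds, else V(k) = V(k-1). Then for every k, the relative precisions deltaL(k) = V(k)/sigmaL2 and deltaB(k) = V(k)/sigmaB2 satisfy the closed formulas deltaL(k) = sigma0/(sigmaL2 + h(k) * sigma0 * (1 + sigmaL2/sigmaB2)) and deltaB(k) = sigma0/(sigmaB2 + h(k) * sigma0 * (1 + sigmaB2/sigmaL2)). -/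
/-- Closed forms for the relative precisions deltaL(k) = V(k)/sigmaL2 and
deltaB(k) = V(k)/sigmaB2 in the Bayesian PSO variant. -/
theorem delta_closed_form (sigma0 sigmaL2 sigmaB2 : ℝ)
    (h0 : 0 < sigma0) (hL : 0 < sigmaL2) (hB : 0 < sigmaB2)
    (e : ℕ → Prop) [DecidablePred e]
    (h : ℕ → ℕ) (hh0 : h 0 = 0)
    (hhk : ∀ k : ℕ, 1 ≤ k → h k = if e k then h (k - 1) + 1 else h (k - 1))
    (V : ℕ → ℝ) (hV0 : V 0 = sigma0)
    (hVk : ∀ k : ℕ, 1 ≤ k → V k =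
      if e k then V (k - 1) / (1 + V (k - 1) / sigmaL2 + V (k - 1) / sigmaB2)
      else V (k - 1)) :
    ∀ k : ℕ,
      V k / sigmaL2 =
        sigma0 / (sigmaL2 + (h k : ℝ) * sigma0 * (1 + sigmaL2 / sigmaB2)) ∧
      V k / sigmaB2 =
        sigma0 / (sigmaB2 + (h k : ℝ) * sigma0 * (1 + sigmaB2 / sigmaL2)) := by
  have hden : ∀ n : ℕ, (0:ℝ) < 1 + (n : ℝ) * sigma0 * (1 / sigmaL2 + 1 / sigmaB2) := by
    intro n
    have : (0:ℝ) ≤ (n : ℝ) * sigma0 * (1 / sigmaL2 + 1 / sigmaB2) := by positivity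
    linarith
  have key : ∀ k : ℕ, V k = sigma0 / (1 + (h k : ℝ) * sigma0 * (1 / sigmaL2 + 1 / sigmaB2)) := by
    intro k
    induction k with
    | zero => simp [hV0, hh0]
    | succ n ih =>
      have hV := hVk (n + 1) (by omega)
      have hhn := hhk (n + 1) (by omega)
      simp only [Nat.add_sub_cancel] at hV hhn
      by_cases he : e (n + 1)
      · rw [hV, hhn, if_pos he, if_pos he, ih]
        have hd := hden (h n)
        push_cast
        field_simp
        ring
      · rw [hV, hhn, if_neg he, if_neg he, ih]
  intro k
  rw [key k]
  have hd := hden (h k)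
  constructor
  · rw [div_div]
    congr 1
    field_simp
  · rw [div_div]
    congr 1
    field_simp
    ring
end

section
/- Let sigmaL2, sigmaB2 be positive reals and sigma0 > 0. Let V : N -> R satisfy V(0) = sigma0 and V(k) = V(k-1)/(1 + deltaL(k-1) + deltaB(k-1)) for k >= 1, where deltaL(j) = V(j)/sigmaL2 and deltaB(j) = V(j)/sigmaB2. Let l, b, mu : N -> R with mu(k) = (mu(k-1) + deltaL(k-1) * l(k-1) + deltaB(k-1) * b(k-1))/(1 + deltaL(k-1) + deltaB(k-1)) for k >= 1, and set muV(k) = mu(k) - mu(k-1). Then for every k >= 2: muV(k) = ((1 - deltaL(k-1) - deltaB(k-1))/(1 + deltaL(k-1) + deltaB(k-1))) * muV(k-1) + (deltaL(k-1)/(1 + deltaL(k-1) + deltaB(k-1))) * (l(k-1) - l(k-2)) + (deltaB(k-1)/(1 + deltaL(k-1) + deltaB(k-1))) * (b(k-1) - b(k-2)). -/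
/-- Abstract one-step algebraic identity. -/
lemma velocity_aux (dL dB mu0 mu1 mu2 l0 l1 b0 b1 : ℝ)
    (hE : (1:ℝ) + dL + dB ≠ 0)
    (hmu1 : mu1 = mu0 * (1 - dL - dB) + dL * l0 + dB * b0)
    (hmu2 : mu2 = (mu1 + dL * l1 + dB * b1) / (1 + dL + dB)) :
    mu2 - mu1 = ((1 - dL - dB) / (1 + dL + dB)) * (mu1 - mu0) +
      (dL / (1 + dL + dB)) * (l1 - l0) + (dB / (1 + dL + dB)) * (b1 - b0) := by
  rw [hmu2, hmu1]
  field_simp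
  ring

/-- The velocity mean muV(k) equals a momentum term plus terms proportional to
the change of the personal and global best positions over the last two steps. -/
theorem velocity_mean_momentum_form (sigma0 sigmaL2 sigmaB2 : ℝ)
    (h0 : 0 < sigma0) (hL : 0 < sigmaL2) (hB : 0 < sigmaB2)
    (V : ℕ → ℝ) (hV0 : V 0 = sigma0)
    (hVk : ∀ k : ℕ, 1 ≤ k →
      V k = V (k - 1) / (1 + V (k - 1) / sigmaL2 + V (k - 1) / sigmaB2))
    (l b mu : ℕ → ℝ)
    (hmu : ∀ k : ℕ, 1 ≤ k →
      mu k = (mu (k - 1) + (V (k - 1) / sigmaL2) * l (k - 1) +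
          (V (k - 1) / sigmaB2) * b (k - 1)) /
        (1 + V (k - 1) / sigmaL2 + V (k - 1) / sigmaB2))
    (muV : ℕ → ℝ) (hmuV : ∀ k : ℕ, 1 ≤ k → muV k = mu k - mu (k - 1)) :
    ∀ k : ℕ, 2 ≤ k →
      muV k =
        ((1 - V (k - 1) / sigmaL2 - V (k - 1) / sigmaB2) /
            (1 + V (k - 1) / sigmaL2 + V (k - 1) / sigmaB2)) * muV (k - 1) +
          ((V (k - 1) / sigmaL2) /
              (1 + V (k - 1) / sigmaL2 + V (k - 1) / sigmaB2)) *
            (l (k - 1) - l (k - 2)) +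
          ((V (k - 1) / sigmaB2) /
              (1 + V (k - 1) / sigmaL2 + V (k - 1) / sigmaB2)) *
            (b (k - 1) - b (k - 2)) := by
  have hVpos : ∀ k, 0 < V k := by
    intro k
    induction k with
    | zero => rw [hV0]; exact h0
    | succ n ih =>
      rw [hVk (n + 1) (by omega)]
      simp only [Nat.add_sub_cancel]
      exact div_pos ih (by positivity)
  intro k hk
  obtain ⟨j, rfl⟩ : ∃ j, k = j + 2 := ⟨k - 2, by omega⟩
  simp only [show j + 2 - 1 = j + 1 from rfl, show j + 2 - 2 = j from rfl]
  have hapos : 0 < V j := hVpos j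
  have hwpos : 0 < V (j + 1) := hVpos (j + 1)
  have hDpos : (0:ℝ) < 1 + V j / sigmaL2 + V j / sigmaB2 := by positivity
  have hEpos : (0:ℝ) < 1 + V (j + 1) / sigmaL2 + V (j + 1) / sigmaB2 := by positivity
  have hw : V (j + 1) = V j / (1 + V j / sigmaL2 + V j / sigmaB2) := by
    have := hVk (j + 1) (by omega); simpa using this
  -- key fact: 1 - δL(j+1) - δB(j+1) = 1/D
  have factA : (1 : ℝ) - V (j + 1) / sigmaL2 - V (j + 1) / sigmaB2 =
      1 / (1 + V j / sigmaL2 + V j / sigmaB2) := by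
    rw [hw]
    field_simp
    ring
  -- Bayes update for mu(j+1) written with new precisions
  have factB : mu (j + 1) = mu j * (1 - V (j + 1) / sigmaL2 - V (j + 1) / sigmaB2) +
      (V (j + 1) / sigmaL2) * l j + (V (j + 1) / sigmaB2) * b j := by
    have h1 : mu (j + 1) = (mu j + (V j / sigmaL2) * l j + (V j / sigmaB2) * b j) /
        (1 + V j / sigmaL2 + V j / sigmaB2) := by
      have := hmu (j + 1) (by omega); simpa using this
    rw [h1, factA, hw]
    field_simp
  have hmu2 : mu (j + 2) = (mu (j + 1) + (V (j + 1) / sigmaL2) * l (j + 1) +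
      (V (j + 1) / sigmaB2) * b (j + 1)) /
      (1 + V (j + 1) / sigmaL2 + V (j + 1) / sigmaB2) := by
    have := hmu (j + 2) (by omega); simpa using this
  have hmuV2 : muV (j + 2) = mu (j + 2) - mu (j + 1) := by
    have := hmuV (j + 2) (by omega); simpa using this
  have hmuV1 : muV (j + 1) = mu (j + 1) - mu j := by
    have := hmuV (j + 1) (by omega); simpa using this
  rw [hmuV2, hmuV1]
  exact velocity_aux (V (j + 1) / sigmaL2) (V (j + 1) / sigmaB2)
    (mu j) (mu (j + 1)) (mu (j + 2)) (l j) (l (j + 1)) (b j) (b (j + 1))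
    (ne_of_gt hEpos) factB hmu2
end

section
/- Let sigmaL2, sigmaB2 be positive reals and sigma0 > 0. Let V : N -> R satisfy V(0) = sigma0 and V(k) = V(k-1)/(1 + deltaL(k-1) + deltaB(k-1)) for k >= 1, where deltaL(j) = V(j)/sigmaL2 and deltaB(j) = V(j)/sigmaB2. Let l, b, mu : N -> R with mu(k) = (mu(k-1) + deltaL(k-1) * l(k-1) + deltaB(k-1) * b(k-1))/(1 + deltaL(k-1) + deltaB(k-1)) for k >= 1, and set muV(k) = mu(k) - mu(k-1). Then for every k >= 2: muV(k) = (1/(1 + deltaL(k-1) + deltaB(k-1))) * muV(k-1) + (deltaL(k-1)/(1 + deltaL(k-1) + deltaB(k-1))) * ((l(k-1) - mu(k-1)) - (l(k-2) - mu(k-2))) + (deltaB(k-1)/(1 + deltaL(k-1) + deltaB(k-1))) * ((b(k-1) - mu(k-1)) - (b(k-2) - mu(k-2))). -/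
/-- The velocity mean muV(k) equals a fraction of the previous velocity mean
plus terms proportional to the change of the distances between the current
position and the personal and global best positions. -/
theorem velocity_mean_distance_form (sigma0 sigmaL2 sigmaB2 : ℝ)
    (h0 : 0 < sigma0) (hL : 0 < sigmaL2) (hB : 0 < sigmaB2)
    (V : ℕ → ℝ) (hV0 : V 0 = sigma0)
    (hVk : ∀ k : ℕ, 1 ≤ k →
      V k = V (k - 1) / (1 + V (k - 1) / sigmaL2 + V (k - 1) / sigmaB2))
    (l b mu : ℕ → ℝ)
    (hmu : ∀ k : ℕ, 1 ≤ k →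
      mu k = (mu (k - 1) + (V (k - 1) / sigmaL2) * l (k - 1) +
          (V (k - 1) / sigmaB2) * b (k - 1)) /
        (1 + V (k - 1) / sigmaL2 + V (k - 1) / sigmaB2))
    (muV : ℕ → ℝ) (hmuV : ∀ k : ℕ, 1 ≤ k → muV k = mu k - mu (k - 1)) :
    ∀ k : ℕ, 2 ≤ k →
      muV k =
        (1 / (1 + V (k - 1) / sigmaL2 + V (k - 1) / sigmaB2)) * muV (k - 1) +
          ((V (k - 1) / sigmaL2) /
              (1 + V (k - 1) / sigmaL2 + V (k - 1) / sigmaB2)) *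
            ((l (k - 1) - mu (k - 1)) - (l (k - 2) - mu (k - 2))) +
          ((V (k - 1) / sigmaB2) /
              (1 + V (k - 1) / sigmaL2 + V (k - 1) / sigmaB2)) *
            ((b (k - 1) - mu (k - 1)) - (b (k - 2) - mu (k - 2))) := by
  have hVpos : ∀ n, 0 < V n := by
    intro n
    induction n with
    | zero => rw [hV0]; exact h0
    | succ n ih =>
      have h := hVk (n + 1) (by omega)
      simp only [Nat.add_sub_cancel] at h
      have hD : 0 < 1 + V n / sigmaL2 + V n / sigmaB2 := by
        have h1 := div_pos ih hL
        have h2 := div_pos ih hB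
        linarith
      rw [h]; exact div_pos ih hD
  intro k hk
  obtain ⟨m, rfl⟩ : ∃ m, k = m + 2 := ⟨k - 2, by omega⟩
  have e1 : m + 2 - 1 = m + 1 := by omega
  have e2 : m + 2 - 2 = m := by omega
  have e3 : m + 1 - 1 = m := by omega
  have hD1 : 0 < 1 + V m / sigmaL2 + V m / sigmaB2 := by
    have h1 := div_pos (hVpos m) hL
    have h2 := div_pos (hVpos m) hB
    linarith
  have hD2 : 0 < 1 + V (m + 1) / sigmaL2 + V (m + 1) / sigmaB2 := by
    have h1 := div_pos (hVpos (m + 1)) hL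
    have h2 := div_pos (hVpos (m + 1)) hB
    linarith
  have hrec := hVk (m + 1) (by omega)
  rw [e3] at hrec
  have hmu2 := hmu (m + 2) (by omega)
  rw [e1] at hmu2
  have hmu1 := hmu (m + 1) (by omega)
  rw [e3] at hmu1
  have hv2 := hmuV (m + 2) (by omega)
  rw [e1] at hv2
  have hv1 := hmuV (m + 1) (by omega)
  rw [e3] at hv1
  have key : mu (m + 1) - mu m =
      (V (m + 1) / sigmaL2) * (l m - mu m) + (V (m + 1) / sigmaB2) * (b m - mu m) := by
    have hP : 0 < sigmaL2 * V m + sigmaL2 * sigmaB2 + V m * sigmaB2 := by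
      have := hVpos m
      nlinarith [mul_pos hL this, mul_pos hL hB, mul_pos this hB]
    have hQ : ((sigmaL2 + V m) * sigmaB2 + V m * sigmaL2) ≠ 0 := by
      have := hVpos m
      nlinarith [mul_pos hL hB, mul_pos this hB, mul_pos this hL]
    rw [hmu1, hrec]
    have hQ' : sigmaB2 * (sigmaL2 + V m) + V m * sigmaL2 ≠ 0 := by
      have := hVpos m
      nlinarith [mul_pos hL hB, mul_pos this hB, mul_pos this hL]
    field_simp
    ring
  rw [e1, e2, hv2, hv1, hmu2, key]
  have hA := hVpos (m + 1)
  set A := V (m + 1) / sigmaL2 with hAdef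
  set B := V (m + 1) / sigmaB2 with hBdef
  have hD : (1 : ℝ) + A + B ≠ 0 := ne_of_gt hD2
  field_simp
  ring
end

section
/- Let sigma0, sigmaL2, sigmaB2 be positive reals, h a natural number with h >= 1, and x, l, b reals with l - x >= 0 and b - x >= 0. Set deltaL = sigma0/(sigmaL2 + h * sigma0 * (1 + sigmaL2/sigmaB2)) and deltaB = sigma0/(sigmaB2 + h * sigma0 * (1 + sigmaB2/sigmaL2)), and let muV = (deltaL * (l - x) + deltaB * (b - x))/(1 + deltaL + deltaB). Then 0 <= muV <= (1/(h * (1 + sigmaL2/sigmaB2))) * (l - x) + (1/(h * (1 + sigmaB2/sigmaL2))) * (b - x). -/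
/-- Bounds for the velocity mean when the cognitive and social components are
nonnegative. -/
theorem velocity_mean_bounds (sigma0 sigmaL2 sigmaB2 : ℝ)
    (h0 : 0 < sigma0) (hL : 0 < sigmaL2) (hB : 0 < sigmaB2)
    (h : ℕ) (hh : 1 ≤ h) (x l b : ℝ) (hlx : 0 ≤ l - x) (hbx : 0 ≤ b - x) :
    0 ≤ ((sigma0 / (sigmaL2 + (h : ℝ) * sigma0 * (1 + sigmaL2 / sigmaB2))) * (l - x) +
          (sigma0 / (sigmaB2 + (h : ℝ) * sigma0 * (1 + sigmaB2 / sigmaL2))) * (b - x)) /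
        (1 + sigma0 / (sigmaL2 + (h : ℝ) * sigma0 * (1 + sigmaL2 / sigmaB2)) +
          sigma0 / (sigmaB2 + (h : ℝ) * sigma0 * (1 + sigmaB2 / sigmaL2))) ∧
    ((sigma0 / (sigmaL2 + (h : ℝ) * sigma0 * (1 + sigmaL2 / sigmaB2))) * (l - x) +
          (sigma0 / (sigmaB2 + (h : ℝ) * sigma0 * (1 + sigmaB2 / sigmaL2))) * (b - x)) /
        (1 + sigma0 / (sigmaL2 + (h : ℝ) * sigma0 * (1 + sigmaL2 / sigmaB2)) +
          sigma0 / (sigmaB2 + (h : ℝ) * sigma0 * (1 + sigmaB2 / sigmaL2))) ≤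
      (1 / ((h : ℝ) * (1 + sigmaL2 / sigmaB2))) * (l - x) +
        (1 / ((h : ℝ) * (1 + sigmaB2 / sigmaL2))) * (b - x) := by
  have hhr : (1 : ℝ) ≤ (h : ℝ) := by exact_mod_cast hh
  have hhpos : (0 : ℝ) < (h : ℝ) := lt_of_lt_of_le one_pos hhr
  have hfL : (0 : ℝ) < 1 + sigmaL2 / sigmaB2 := by positivity
  have hfB : (0 : ℝ) < 1 + sigmaB2 / sigmaL2 := by positivity
  have hdL : (0 : ℝ) < sigmaL2 + (h : ℝ) * sigma0 * (1 + sigmaL2 / sigmaB2) := by positivity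
  have hdB : (0 : ℝ) < sigmaB2 + (h : ℝ) * sigma0 * (1 + sigmaB2 / sigmaL2) := by positivity
  set dL := sigma0 / (sigmaL2 + (h : ℝ) * sigma0 * (1 + sigmaL2 / sigmaB2)) with hdLdef
  set dB := sigma0 / (sigmaB2 + (h : ℝ) * sigma0 * (1 + sigmaB2 / sigmaL2)) with hdBdef
  have hdLpos : 0 < dL := div_pos h0 hdL
  have hdBpos : 0 < dB := div_pos h0 hdB
  have hden : (1 : ℝ) ≤ 1 + dL + dB := by linarith
  have hdenpos : (0 : ℝ) < 1 + dL + dB := by linarith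
  have hnum : 0 ≤ dL * (l - x) + dB * (b - x) := by positivity
  constructor
  · exact div_nonneg hnum (le_of_lt hdenpos)
  · have step1 : (dL * (l - x) + dB * (b - x)) / (1 + dL + dB) ≤ dL * (l - x) + dB * (b - x) := by
      rw [div_le_iff₀ hdenpos]
      nlinarith
    have hLbound : dL ≤ 1 / ((h : ℝ) * (1 + sigmaL2 / sigmaB2)) := by
      rw [hdLdef, div_le_div_iff₀ hdL (by positivity)]
      have : sigma0 * ((h : ℝ) * (1 + sigmaL2 / sigmaB2)) =
          (h : ℝ) * sigma0 * (1 + sigmaL2 / sigmaB2) := by ring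
      linarith [hL.le]
    have hBbound : dB ≤ 1 / ((h : ℝ) * (1 + sigmaB2 / sigmaL2)) := by
      rw [hdBdef, div_le_div_iff₀ hdB (by positivity)]
      have : sigma0 * ((h : ℝ) * (1 + sigmaB2 / sigmaL2)) =
          (h : ℝ) * sigma0 * (1 + sigmaB2 / sigmaL2) := by ring
      linarith [hB.le]
    have step2 : dL * (l - x) + dB * (b - x) ≤
        (1 / ((h : ℝ) * (1 + sigmaL2 / sigmaB2))) * (l - x) +
          (1 / ((h : ℝ) * (1 + sigmaB2 / sigmaL2))) * (b - x) := by
      gcongr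
    linarith
end
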